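/- Under the regularity setting, for any sequence (ξ̂ₙ) of maximum likelihood estimators, the following uniform separation holds: there exists ρ₀ > 0 such that for every ρ ∈ (0,ρ₀) there exists δ > 0 such that, almost surely, for all sufficiently large n, sup{ℓ̄ₙ(ξ) : ξ ∈ Ξ, ‖ξ − ξ*‖ ≥ ρ} < ℓ̄ₙ(ξ̂ₙ) − δ, where ℓ̄ₙ(ξ) = (1/n)Σ_{i=1}^n log f(yᵢ|ξ). -/

import Mathlib

open MeasureTheory ProbabilityTheory Filter

noncomputable section

/-- The regularity setting (R3)–(R8) for a statistical model `{f(·|ξ) : ξ ∈ Ξ}`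
on countable data, with respect to the data-generating pmf `q`. -/
structure RegularModel (Y : Type) (q : Y → ℝ) (d : ℕ) where
  Xi : Set (EuclideanSpace ℝ (Fin d))
  Xi_open : IsOpen Xi
  Xi_nonempty : Xi.Nonempty
  f : Y → EuclideanSpace ℝ (Fin d) → ℝ
  f_pos : ∀ y, ∀ ξ ∈ Xi, 0 < f y ξ
  f_pmf : ∀ ξ ∈ Xi, ∑' y, f y ξ = 1
  xistar : EuclideanSpace ℝ (Fin d)
  xistar_mem : xistar ∈ Xi
  /-- (R3): the Kullback–Leibler divergence is finite (summable) at `xistar`. -/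
  R3_summable : Summable (fun y => q y * Real.log (q y / f y xistar))
  /-- (R3): `xistar` is the unique minimizer of the Kullback–Leibler divergence over `Xi`. -/
  R3_unique_min : ∀ ξ ∈ Xi, ξ ≠ xistar →
    ¬ Summable (fun y => q y * Real.log (q y / f y ξ)) ∨
      (∑' y, q y * Real.log (q y / f y xistar)) < ∑' y, q y * Real.log (q y / f y ξ)
  /-- (R4): finite second moment of the log-likelihood ratio at `xistar`. -/
  R4 : Summable (fun y => q y * (Real.log (q y / f y xistar)) ^ 2)
  /-- gradient of the unit log-likelihood -/
  s : Y → EuclideanSpace ℝ (Fin d) → EuclideanSpace ℝ (Fin d)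
  /-- Hessian of the unit log-likelihood -/
  H : Y → EuclideanSpace ℝ (Fin d) → EuclideanSpace ℝ (Fin d) →L[ℝ] EuclideanSpace ℝ (Fin d)
  /-- (R5): the unit log-likelihood has gradient `s` on `Xi`. -/
  R5_grad : ∀ y, ∀ ξ ∈ Xi, HasGradientAt (fun ξ' => Real.log (f y ξ')) (s y ξ) ξ
  /-- (R5): the gradient has derivative (Hessian) `H` on `Xi`. -/
  R5_hess : ∀ y, ∀ ξ ∈ Xi, HasFDerivAt (s y) (H y ξ) ξ
  /-- (R5): the Hessian is continuous on `Xi`. -/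
  R5_cont : ∀ y, ContinuousOn (H y) Xi
  /-- (R6) -/
  R6_log : Summable (fun y => q y * |Real.log (f y xistar)|)
  /-- (R6) -/
  R6_score : Summable (fun y => q y * ‖s y xistar‖ ^ 2)
  /-- radius of the ball `B` of (R7) -/
  r : ℝ
  r_pos : 0 < r
  ball_subset : Metric.ball xistar r ⊆ Xi
  c : Y → ℝ
  c_nonneg : ∀ y, 0 ≤ c y
  c_summable : Summable (fun y => q y * c y)
  /-- (R7): domination of the Hessian on the ball `B`. -/
  R7_bound : ∀ y, ∀ ξ ∈ Metric.ball xistar r, ‖H y ξ‖ ≤ c y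
  /-- (R8): connected upper level sets of all average log-likelihoods. -/
  R8 : ∀ (n : ℕ) (ys : Fin n → Y) (lam : ℝ),
    IsPreconnected {ξ | ξ ∈ Xi ∧ lam < (1 / (n : ℝ)) * ∑ i, Real.log (f (ys i) ξ)}

/-- The ball `B` of assumption (R7). -/
def RegularModel.B {Y : Type} {q : Y → ℝ} {d : ℕ} (M : RegularModel Y q d) :
    Set (EuclideanSpace ℝ (Fin d)) :=
  Metric.ball M.xistar M.r

/-- `yseq` are i.i.d. random variables on `(Ω, P)` with common pmf `q`. -/
def IIDData {Ω Y : Type} [MeasurableSpace Ω] [MeasurableSpace Y]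
    (P : Measure Ω) (yseq : ℕ → Ω → Y) (q : Y → ℝ) : Prop :=
  (∀ i, Measurable (yseq i)) ∧
    iIndepFun yseq P ∧
      ∀ i y, (P {ω | yseq i ω = y}).toReal = q y

/-- The average log-likelihood based on the data `ys`. -/
def avgLogLik {Y : Type} {d : ℕ} (f : Y → EuclideanSpace ℝ (Fin d) → ℝ)
    (n : ℕ) (ys : Fin n → Y) (ξ : EuclideanSpace ℝ (Fin d)) : ℝ :=
  (1 / (n : ℝ)) * ∑ i, Real.log (f (ys i) ξ)

/-- `est` is a sequence of maximum-likelihood estimators: `est n` is a measurable,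
`Ξ`-valued function of the first `n` observations which, almost surely, for all
sufficiently large `n`, globally maximizes the average log-likelihood over `Ξ`. -/
def IsMLESeq {Ω Y : Type} [MeasurableSpace Ω] [MeasurableSpace Y] {q : Y → ℝ} {d : ℕ}
    (M : RegularModel Y q d) (P : Measure Ω) (yseq : ℕ → Ω → Y)
    (est : (n : ℕ) → (Fin n → Y) → EuclideanSpace ℝ (Fin d)) : Prop :=
  (∀ n, Measurable (est n)) ∧ (∀ n ys, est n ys ∈ M.Xi) ∧
    ∀ᵐ ω ∂P, ∃ N : ℕ, ∀ n ≥ N, ∀ ξ ∈ M.Xi,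
      avgLogLik M.f n (fun i => yseq i ω) ξ ≤
        avgLogLik M.f n (fun i => yseq i ω) (est n (fun i => yseq i ω))

/-- A sequence of real random variables is bounded in probability. -/
def BoundedInProb {Ω : Type} [MeasurableSpace Ω] (P : Measure Ω) (R : ℕ → Ω → ℝ) : Prop :=
  ∀ ε > (0 : ℝ), ∃ M > (0 : ℝ), ∃ N : ℕ, ∀ n ≥ N, (P {ω | M < |R n ω|}).toReal < ε

end


open Topology ENNReal NNReal

noncomputable section
set_option linter.unusedSectionVars false
set_option linter.unusedVariables false
set_option maxHeartbeats 1000000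

section ProbAux

variable {Y Ω : Type} [Countable Y] [MeasurableSpace Y] [MeasurableSingletonClass Y]
    [MeasurableSpace Ω] {q : Y → ℝ}
    {P : Measure Ω} [IsProbabilityMeasure P] {yseq : ℕ → Ω → Y}

lemma my_map_eq (hiid : IIDData P yseq q) (i : ℕ) :
    Measure.map (yseq i) P = Measure.map (yseq 0) P := by
  apply MeasureTheory.Measure.ext_of_singleton
  intro y
  rw [Measure.map_apply (hiid.1 i) (measurableSet_singleton y),
    Measure.map_apply (hiid.1 0) (measurableSet_singleton y)]
  have h1 := hiid.2.2 i y
  have h2 := hiid.2.2 0 y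
  have e1 : yseq i ⁻¹' {y} = {ω | yseq i ω = y} := rfl
  have e2 : yseq 0 ⁻¹' {y} = {ω | yseq 0 ω = y} := rfl
  rw [e1, e2]
  have f1 : P {ω | yseq i ω = y} ≠ ⊤ := measure_ne_top _ _
  have f2 : P {ω | yseq 0 ω = y} ≠ ⊤ := measure_ne_top _ _
  rw [← ENNReal.toReal_eq_toReal_iff' f1 f2, h1, h2]

lemma my_map_singleton (hq_pos : ∀ y, 0 < q y) (hiid : IIDData P yseq q) (y : Y) :
    Measure.map (yseq 0) P {y} = ENNReal.ofReal (q y) := by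
  rw [Measure.map_apply (hiid.1 0) (measurableSet_singleton y)]
  have h2 := hiid.2.2 0 y
  have e2 : yseq 0 ⁻¹' {y} = {ω | yseq 0 ω = y} := rfl
  rw [e2, ← h2, ENNReal.ofReal_toReal (measure_ne_top _ _)]

lemma my_integrable (hq_pos : ∀ y, 0 < q y) (hiid : IIDData P yseq q)
    {g : Y → ℝ} (hsum : Summable (fun y => q y * |g y|)) (i : ℕ) :
    Integrable (fun ω => g (yseq i ω)) P := by
  have hg : Measurable g := measurable_of_countable g
  have hInt : Integrable g (Measure.map (yseq 0) P) := by
    constructor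
    · exact hg.aestronglyMeasurable
    · rw [HasFiniteIntegral, lintegral_countable']
      have : ∀ y : Y, ‖g y‖ₑ * (Measure.map (yseq 0) P) {y}
          = ENNReal.ofReal (q y * |g y|) := by
        intro y
        rw [my_map_singleton hq_pos hiid y, ENNReal.ofReal_mul (hq_pos y).le]
        rw [mul_comm]
        congr 1
        exact Real.enorm_eq_ofReal_abs _
      rw [tsum_congr this, ← ENNReal.ofReal_tsum_of_nonneg
        (fun y => mul_nonneg (hq_pos y).le (abs_nonneg _)) hsum]
      exact ENNReal.ofReal_lt_top
  have : Integrable g (Measure.map (yseq i) P) := by rw [my_map_eq hiid i]; exact hInt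
  exact (integrable_map_measure hg.aestronglyMeasurable (hiid.1 i).aemeasurable).mp this

lemma my_integral (hq_pos : ∀ y, 0 < q y) (hiid : IIDData P yseq q)
    {g : Y → ℝ} (hsum : Summable (fun y => q y * |g y|)) :
    ∫ ω, g (yseq 0 ω) ∂P = ∑' y, q y * g y := by
  have hg : Measurable g := measurable_of_countable g
  rw [← integral_map (hiid.1 0).aemeasurable hg.aestronglyMeasurable]
  rw [integral_countable' ((integrable_map_measure hg.aestronglyMeasurable
    (hiid.1 0).aemeasurable).mpr (my_integrable hq_pos hiid hsum 0))]
  apply tsum_congr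
  intro y
  rw [measureReal_def, my_map_singleton hq_pos hiid y, ENNReal.toReal_ofReal (hq_pos y).le]
  simp [mul_comm]

lemma my_slln (hq_pos : ∀ y, 0 < q y) (hiid : IIDData P yseq q)
    {g : Y → ℝ} (hsum : Summable (fun y => q y * |g y|)) :
    ∀ᵐ ω ∂P, Tendsto (fun n : ℕ => (1 / (n : ℝ)) * ∑ i : Fin n, g (yseq i ω))
      atTop (𝓝 (∑' y, q y * g y)) := by
  have hg : Measurable g := measurable_of_countable g
  have h := strong_law_ae_real (fun i ω => g (yseq i ω))
    (my_integrable hq_pos hiid hsum 0)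
    (fun i j hij => ((hiid.2.1.indepFun hij).comp hg hg))
    (fun i => ⟨(hg.comp (hiid.1 i)).aemeasurable,
      (hg.comp (hiid.1 0)).aemeasurable, by
        show Measure.map (g ∘ yseq i) P = Measure.map (g ∘ yseq 0) P
        rw [← Measure.map_map hg (hiid.1 i), ← Measure.map_map hg (hiid.1 0),
          my_map_eq hiid i]⟩)
  rw [my_integral hq_pos hiid hsum] at h
  filter_upwards [h] with ω hω
  convert hω using 2 with n
  rw [Fin.sum_univ_eq_sum_range (fun i => g (yseq i ω)) n, one_div, inv_mul_eq_div]


end ProbAux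

section ModelAux

variable {Y : Type} {q : Y → ℝ} {d : ℕ} (M : RegularModel Y q d)

/-- Score bound on a closed ball inside `B`. -/
lemma score_bound {ρ : ℝ} (hρ0 : 0 ≤ ρ) (hρr : ρ < M.r) (y : Y)
    {ζ : EuclideanSpace ℝ (Fin d)} (hζ : ζ ∈ Metric.closedBall M.xistar ρ) :
    ‖M.s y ζ‖ ≤ ‖M.s y M.xistar‖ + M.c y * ρ := by
  have hsub : Metric.ball M.xistar M.r ⊆ M.Xi := M.ball_subset
  have hconv : Convex ℝ (Metric.ball M.xistar M.r) := convex_ball _ _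
  have hζ' : ζ ∈ Metric.ball M.xistar M.r :=
    Metric.closedBall_subset_ball hρr hζ
  have hstar : M.xistar ∈ Metric.ball M.xistar M.r := Metric.mem_ball_self M.r_pos
  have key : ‖M.s y ζ - M.s y M.xistar‖ ≤ M.c y * ‖ζ - M.xistar‖ :=
    hconv.norm_image_sub_le_of_norm_hasFDerivWithin_le
      (fun x hx => ((M.R5_hess y x (hsub hx)).hasFDerivWithinAt))
      (fun x hx => M.R7_bound y x hx) hstar hζ'
  have hdist : ‖ζ - M.xistar‖ ≤ ρ := by
    rw [← dist_eq_norm]; exact Metric.mem_closedBall.mp hζ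
  calc ‖M.s y ζ‖ ≤ ‖M.s y M.xistar‖ + ‖M.s y ζ - M.s y M.xistar‖ := by
        have := norm_sub_norm_le (M.s y ζ) (M.s y M.xistar); linarith [norm_sub_rev (M.s y ζ) (M.s y M.xistar) ▸ this]
    _ ≤ ‖M.s y M.xistar‖ + M.c y * ρ := by
        have := mul_le_mul_of_nonneg_left hdist (M.c_nonneg y)
        linarith [key]

/-- `log f y ·` is Lipschitz on closed balls inside `B`. -/
lemma logf_lip {ρ : ℝ} (hρ0 : 0 ≤ ρ) (hρr : ρ < M.r) (y : Y)
    {ξ ξ' : EuclideanSpace ℝ (Fin d)} (hξ : ξ ∈ Metric.closedBall M.xistar ρ)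
    (hξ' : ξ' ∈ Metric.closedBall M.xistar ρ) :
    |Real.log (M.f y ξ) - Real.log (M.f y ξ')| ≤
      (‖M.s y M.xistar‖ + M.c y * ρ) * ‖ξ - ξ'‖ := by
  have hsub : Metric.closedBall M.xistar ρ ⊆ M.Xi :=
    (Metric.closedBall_subset_ball hρr).trans M.ball_subset
  have hconv : Convex ℝ (Metric.closedBall M.xistar ρ) := convex_closedBall _ _
  have key := hconv.norm_image_sub_le_of_norm_hasFDerivWithin_le
    (f := fun ξ'' => Real.log (M.f y ξ''))
    (f' := fun x => (InnerProductSpace.toDual ℝ (EuclideanSpace ℝ (Fin d))) (M.s y x))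
    (fun x hx => ((M.R5_grad y x (hsub hx)).hasFDerivAt).hasFDerivWithinAt)
    (fun x hx => by
      rw [LinearIsometryEquiv.norm_map]
      exact score_bound M hρ0 hρr y hx)
    hξ' hξ
  rw [← Real.norm_eq_abs]
  exact key

lemma summable_q_score (hq_pos : ∀ y, 0 < q y) (hqsum : Summable q) :
    Summable (fun y => q y * ‖M.s y M.xistar‖) := by
  refine Summable.of_norm_bounded (g :=
    fun y => q y * (1/2) + q y * ‖M.s y M.xistar‖ ^ 2 * (1/2))
    ((hqsum.mul_right _).add (M.R6_score.mul_right _)) ?_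
  intro y
  rw [Real.norm_eq_abs, abs_of_nonneg (mul_nonneg (hq_pos y).le (norm_nonneg _))]
  have h : ‖M.s y M.xistar‖ ≤ (1 + ‖M.s y M.xistar‖ ^ 2) / 2 := by
    nlinarith [sq_nonneg (‖M.s y M.xistar‖ - 1)]
  have := mul_le_mul_of_nonneg_left h (hq_pos y).le
  linarith [this]

lemma summable_q_g (hq_pos : ∀ y, 0 < q y) (hqsum : Summable q) (ρ : ℝ) :
    Summable (fun y => q y * (‖M.s y M.xistar‖ + M.c y * ρ)) := by
  have h := (summable_q_score M hq_pos hqsum).add ((M.c_summable).mul_right ρ)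
  convert h using 2 with y
  ring

lemma summable_q_abslog (hq_pos : ∀ y, 0 < q y) (hqsum : Summable q)
    {ρ : ℝ} (hρ0 : 0 ≤ ρ) (hρr : ρ < M.r)
    {ξ : EuclideanSpace ℝ (Fin d)} (hξ : ξ ∈ Metric.closedBall M.xistar ρ) :
    Summable (fun y => q y * |Real.log (M.f y ξ)|) := by
  have hstar : M.xistar ∈ Metric.closedBall M.xistar ρ := Metric.mem_closedBall_self hρ0
  refine Summable.of_norm_bounded (g :=
    fun y => q y * |Real.log (M.f y M.xistar)| +
      q y * (‖M.s y M.xistar‖ + M.c y * ρ) * ρ)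
    (M.R6_log.add ((summable_q_g M hq_pos hqsum ρ).mul_right ρ)) ?_
  intro y
  rw [Real.norm_eq_abs, abs_of_nonneg (mul_nonneg (hq_pos y).le (abs_nonneg _))]
  have h1 : |Real.log (M.f y ξ)| ≤ |Real.log (M.f y M.xistar)| +
      |Real.log (M.f y ξ) - Real.log (M.f y M.xistar)| := by
    have := abs_sub_abs_le_abs_sub (Real.log (M.f y ξ)) (Real.log (M.f y M.xistar))
    linarith
  have h2 := logf_lip M hρ0 hρr y hξ hstar
  have h3 : ‖ξ - M.xistar‖ ≤ ρ := by
    rw [← dist_eq_norm]; exact Metric.mem_closedBall.mp hξ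
  have h4 : |Real.log (M.f y ξ) - Real.log (M.f y M.xistar)| ≤
      (‖M.s y M.xistar‖ + M.c y * ρ) * ρ := by
    refine h2.trans ?_
    exact mul_le_mul_of_nonneg_left h3
      (add_nonneg (norm_nonneg _) (mul_nonneg (M.c_nonneg y) hρ0))
  have h5 : |Real.log (M.f y ξ)| ≤ |Real.log (M.f y M.xistar)| +
      (‖M.s y M.xistar‖ + M.c y * ρ) * ρ := h1.trans (by linarith)
  calc q y * |Real.log (M.f y ξ)| ≤ q y * (|Real.log (M.f y M.xistar)| +
        (‖M.s y M.xistar‖ + M.c y * ρ) * ρ) :=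
      mul_le_mul_of_nonneg_left h5 (hq_pos y).le
    _ = q y * |Real.log (M.f y M.xistar)| +
        q y * (‖M.s y M.xistar‖ + M.c y * ρ) * ρ := by ring

/-- The population mean log-likelihood. -/
def Lfun (M : RegularModel Y q d) (ξ : EuclideanSpace ℝ (Fin d)) : ℝ :=
  ∑' y, q y * Real.log (M.f y ξ)

lemma summable_q_log (hq_pos : ∀ y, 0 < q y) (hqsum : Summable q)
    {ρ : ℝ} (hρ0 : 0 ≤ ρ) (hρr : ρ < M.r)
    {ξ : EuclideanSpace ℝ (Fin d)} (hξ : ξ ∈ Metric.closedBall M.xistar ρ) :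
    Summable (fun y => q y * Real.log (M.f y ξ)) := by
  apply Summable.of_abs
  have h := summable_q_abslog M hq_pos hqsum hρ0 hρr hξ
  refine h.congr fun y => ?_
  rw [abs_mul, abs_of_pos (hq_pos y)]

lemma Lfun_lip (hq_pos : ∀ y, 0 < q y) (hqsum : Summable q)
    {ρ : ℝ} (hρ0 : 0 ≤ ρ) (hρr : ρ < M.r)
    {ξ ξ' : EuclideanSpace ℝ (Fin d)} (hξ : ξ ∈ Metric.closedBall M.xistar ρ)
    (hξ' : ξ' ∈ Metric.closedBall M.xistar ρ) :
    |Lfun M ξ - Lfun M ξ'| ≤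
      (∑' y, q y * (‖M.s y M.xistar‖ + M.c y * ρ)) * ‖ξ - ξ'‖ := by
  have hs1 := summable_q_log M hq_pos hqsum hρ0 hρr hξ
  have hs2 := summable_q_log M hq_pos hqsum hρ0 hρr hξ'
  have hdiff : Lfun M ξ - Lfun M ξ' =
      ∑' y, (q y * Real.log (M.f y ξ) - q y * Real.log (M.f y ξ')) :=
    (Summable.tsum_sub hs1 hs2).symm
  have hptw : ∀ y, |q y * Real.log (M.f y ξ) - q y * Real.log (M.f y ξ')| ≤
      q y * (‖M.s y M.xistar‖ + M.c y * ρ) * ‖ξ - ξ'‖ := by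
    intro y
    rw [← mul_sub, abs_mul, abs_of_pos (hq_pos y), mul_assoc]
    exact mul_le_mul_of_nonneg_left (logf_lip M hρ0 hρr y hξ hξ') (hq_pos y).le
  have hsb : Summable (fun y => q y * (‖M.s y M.xistar‖ + M.c y * ρ) * ‖ξ - ξ'‖) :=
    (summable_q_g M hq_pos hqsum ρ).mul_right _
  have hsabs : Summable (fun y => |q y * Real.log (M.f y ξ) - q y * Real.log (M.f y ξ')|) := by
    refine Summable.of_norm_bounded hsb ?_
    intro y
    rw [Real.norm_eq_abs, abs_abs]
    exact hptw y
  rw [hdiff]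
  calc |∑' y, (q y * Real.log (M.f y ξ) - q y * Real.log (M.f y ξ'))| ≤
      ∑' y, |q y * Real.log (M.f y ξ) - q y * Real.log (M.f y ξ')| := by
        have := norm_tsum_le_tsum_norm (f := fun y =>
          q y * Real.log (M.f y ξ) - q y * Real.log (M.f y ξ')) (by
            simpa [Real.norm_eq_abs] using hsabs)
        simpa [Real.norm_eq_abs] using this
    _ ≤ ∑' y, q y * (‖M.s y M.xistar‖ + M.c y * ρ) * ‖ξ - ξ'‖ :=
        Summable.tsum_le_tsum hptw hsabs hsb
    _ = (∑' y, q y * (‖M.s y M.xistar‖ + M.c y * ρ)) * ‖ξ - ξ'‖ := tsum_mul_right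

lemma Lfun_lt_star (hq_pos : ∀ y, 0 < q y) (hqsum : Summable q)
    {ξ : EuclideanSpace ℝ (Fin d)} (hξ : ξ ∈ Metric.ball M.xistar M.r)
    (hne : ξ ≠ M.xistar) : Lfun M ξ < Lfun M M.xistar := by
  set ρ := dist ξ M.xistar with hρdef
  have hρ0 : 0 ≤ ρ := dist_nonneg
  have hρr : ρ < M.r := Metric.mem_ball.mp hξ
  have hξc : ξ ∈ Metric.closedBall M.xistar ρ := Metric.mem_closedBall.mpr le_rfl
  have hstarc : M.xistar ∈ Metric.closedBall M.xistar ρ := Metric.mem_closedBall_self hρ0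
  have hξXi : ξ ∈ M.Xi := M.ball_subset hξ
  have hlog : ∀ (ζ : EuclideanSpace ℝ (Fin d)), ζ ∈ M.Xi → ∀ y,
      q y * Real.log (q y / M.f y ζ) = q y * Real.log (q y) - q y * Real.log (M.f y ζ) := by
    intro ζ hζ y
    rw [Real.log_div (ne_of_gt (hq_pos y)) (ne_of_gt (M.f_pos y ζ hζ))]
    ring
  have hsstar : Summable (fun y => q y * Real.log (M.f y M.xistar)) :=
    summable_q_log M hq_pos hqsum le_rfl M.r_pos (Metric.mem_closedBall_self le_rfl)
  have hsξ : Summable (fun y => q y * Real.log (M.f y ξ)) :=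
    summable_q_log M hq_pos hqsum hρ0 hρr hξc
  have hHq : Summable (fun y => q y * Real.log (q y)) := by
    have h := M.R3_summable.add hsstar
    apply h.congr
    intro y
    rw [hlog M.xistar M.xistar_mem y]
    ring
  have hKξ : Summable (fun y => q y * Real.log (q y / M.f y ξ)) := by
    apply (hHq.sub hsξ).congr
    intro y
    rw [hlog ξ hξXi y]
  rcases M.R3_unique_min ξ hξXi hne with h | h
  · exact absurd hKξ h
  · have e1 : ∑' y, q y * Real.log (q y / M.f y ξ) =
        (∑' y, q y * Real.log (q y)) - Lfun M ξ := by
      simp only [Lfun]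
      rw [← Summable.tsum_sub hHq hsξ]
      exact tsum_congr (hlog ξ hξXi)
    have e2 : ∑' y, q y * Real.log (q y / M.f y M.xistar) =
        (∑' y, q y * Real.log (q y)) - Lfun M M.xistar := by
      simp only [Lfun]
      rw [← Summable.tsum_sub hHq hsstar]
      exact tsum_congr (hlog M.xistar M.xistar_mem)
    rw [e1, e2] at h
    linarith

lemma exists_gap (hq_pos : ∀ y, 0 < q y) (hqsum : Summable q) (hd : 0 < d)
    {ρ : ℝ} (hρ0 : 0 < ρ) (hρr : ρ < M.r) :
    ∃ a > 0, ∀ ζ ∈ Metric.sphere M.xistar ρ, Lfun M ζ ≤ Lfun M M.xistar - a := by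
  have hcomp : IsCompact (Metric.sphere M.xistar ρ) := isCompact_sphere _ _
  have hne : (Metric.sphere M.xistar ρ).Nonempty := by
    refine ⟨M.xistar + EuclideanSpace.single ⟨0, hd⟩ ρ, ?_⟩
    simp [Metric.mem_sphere, dist_eq_norm, EuclideanSpace.norm_single,
      abs_of_pos hρ0]
  set G := ∑' y, q y * (‖M.s y M.xistar‖ + M.c y * ρ) with hG
  have hlip : LipschitzOnWith (Real.toNNReal G) (Lfun M) (Metric.closedBall M.xistar ρ) := by
    rw [lipschitzOnWith_iff_norm_sub_le]
    intro x hx y hy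
    have := Lfun_lip M hq_pos hqsum hρ0.le hρr hx hy
    rw [Real.norm_eq_abs]
    refine this.trans (mul_le_mul_of_nonneg_right (Real.le_coe_toNNReal G) (norm_nonneg _))
  have hcont : ContinuousOn (Lfun M) (Metric.sphere M.xistar ρ) :=
    hlip.continuousOn.mono Metric.sphere_subset_closedBall
  obtain ⟨ζ0, hζ0, hmax⟩ := hcomp.exists_isMaxOn hne hcont
  have hζ0ball : ζ0 ∈ Metric.ball M.xistar M.r := by
    have := Metric.mem_sphere.mp hζ0
    exact Metric.mem_ball.mpr (by rw [this]; exact hρr)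
  have hζ0ne : ζ0 ≠ M.xistar := by
    intro h
    have := Metric.mem_sphere.mp hζ0
    rw [h, dist_self] at this
    exact absurd this.symm (ne_of_gt hρ0)
  refine ⟨Lfun M M.xistar - Lfun M ζ0, by
    have := Lfun_lt_star M hq_pos hqsum hζ0ball hζ0ne; linarith, ?_⟩
  intro ζ hζ
  have := hmax hζ
  simp only [Set.mem_setOf_eq] at this
  linarith [this]



lemma avg_lip {Y : Type} {q : Y → ℝ} {d : ℕ} (M : RegularModel Y q d)
    {ρ : ℝ} (hρ0 : 0 ≤ ρ) (hρr : ρ < M.r)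
    (n : ℕ) (ys : Fin n → Y) {ξ ξ' : EuclideanSpace ℝ (Fin d)}
    (hξ : ξ ∈ Metric.closedBall M.xistar ρ) (hξ' : ξ' ∈ Metric.closedBall M.xistar ρ) :
    |(1 / (n : ℝ)) * ∑ i, Real.log (M.f (ys i) ξ)
        - (1 / (n : ℝ)) * ∑ i, Real.log (M.f (ys i) ξ')| ≤
      ((1 / (n : ℝ)) * ∑ i, (‖M.s (ys i) M.xistar‖ + M.c (ys i) * ρ)) * ‖ξ - ξ'‖ := by
  rw [← mul_sub, ← Finset.sum_sub_distrib, abs_mul,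
    abs_of_nonneg (by positivity : (0:ℝ) ≤ 1 / (n:ℝ))]
  have h1 : |∑ i, (Real.log (M.f (ys i) ξ) - Real.log (M.f (ys i) ξ'))| ≤
      ∑ i, (‖M.s (ys i) M.xistar‖ + M.c (ys i) * ρ) * ‖ξ - ξ'‖ :=
    (Finset.abs_sum_le_sum_abs _ _).trans
      (Finset.sum_le_sum fun i _ => logf_lip M hρ0 hρr (ys i) hξ hξ')
  calc (1/(n:ℝ)) * |∑ i, (Real.log (M.f (ys i) ξ) - Real.log (M.f (ys i) ξ'))|
      ≤ (1/(n:ℝ)) * ∑ i, (‖M.s (ys i) M.xistar‖ + M.c (ys i) * ρ) * ‖ξ - ξ'‖ :=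
        mul_le_mul_of_nonneg_left h1 (by positivity)
    _ = ((1/(n:ℝ)) * ∑ i, (‖M.s (ys i) M.xistar‖ + M.c (ys i) * ρ)) * ‖ξ - ξ'‖ := by
        rw [← Finset.sum_mul, mul_assoc]

end ModelAux

end

/-- under the regularity setting, for any sequence of maximum likelihood
estimators, uniform separation holds: there is `ρ₀ > 0` such that for every
`ρ ∈ (0, ρ₀)` there is `δ > 0` with, almost surely, for all sufficiently large `n`,
`ℓ̄ₙ(ξ) < ℓ̄ₙ(ξ̂ₙ) − δ` for every `ξ ∈ Ξ` with `‖ξ − ξ*‖ ≥ ρ`. -/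
theorem mle_uniform_separation
    {Y Ω : Type} [Countable Y] [MeasurableSpace Y] [MeasurableSingletonClass Y]
    [MeasurableSpace Ω] {d : ℕ} {q : Y → ℝ}
    (P : MeasureTheory.Measure Ω) [MeasureTheory.IsProbabilityMeasure P]
    (yseq : ℕ → Ω → Y)
    (hq_pos : ∀ y, 0 < q y) (hq_pmf : ∑' y, q y = 1)
    (hiid : IIDData P yseq q)
    (M : RegularModel Y q d)
    (est : (n : ℕ) → (Fin n → Y) → EuclideanSpace ℝ (Fin d))
    (hest : IsMLESeq M P yseq est) :
    ∃ ρ₀ > (0 : ℝ), ∀ ρ, 0 < ρ → ρ < ρ₀ → ∃ δ > (0 : ℝ),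
      ∀ᵐ ω ∂P, ∃ N : ℕ, ∀ n ≥ N, ∀ ξ ∈ M.Xi, ρ ≤ ‖ξ - M.xistar‖ →
        avgLogLik M.f n (fun i => yseq i ω) ξ <
          avgLogLik M.f n (fun i => yseq i ω) (est n (fun i => yseq i ω)) - δ := by
  classical
  have hqsum : Summable q := by
    by_contra h
    rw [tsum_eq_zero_of_not_summable h] at hq_pmf
    norm_num at hq_pmf
  by_cases hd : 0 < d
  case neg =>
    refine ⟨M.r, M.r_pos, fun ρ hρ0 hρr => ⟨1, one_pos, ae_of_all _ fun ω => ⟨0, ?_⟩⟩⟩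
    intro n hn ξ hξ hρξ
    exfalso
    have hξeq : ξ = M.xistar := by
      ext i
      exact absurd i.isLt (by omega)
    rw [hξeq, sub_self, norm_zero] at hρξ
    linarith
  case pos =>
  refine ⟨M.r, M.r_pos, ?_⟩
  intro ρ hρ0 hρr
  obtain ⟨a, ha, hgap⟩ := exists_gap M hq_pos hqsum hd hρ0 hρr
  simp only [Lfun] at hgap
  set G := ∑' y, q y * (‖M.s y M.xistar‖ + M.c y * ρ) with hGdef
  have hG0 : 0 ≤ G :=
    tsum_nonneg fun y => mul_nonneg (hq_pos y).le
      (add_nonneg (norm_nonneg _) (mul_nonneg (M.c_nonneg y) hρ0.le))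
  set ε := a / (8 * (G + 1)) with hεdef
  have hε : 0 < ε := by positivity
  obtain ⟨T, hTsub, hTcover⟩ := (isCompact_sphere M.xistar ρ).elim_nhds_subcover
    (fun t => Metric.ball t ε) (fun t _ => Metric.ball_mem_nhds t hε)
  have hsphere_cb : Metric.sphere M.xistar ρ ⊆ Metric.closedBall M.xistar ρ :=
    Metric.sphere_subset_closedBall
  refine ⟨a / 4, by linarith, ?_⟩
  have hE1 := my_slln hq_pos hiid M.R6_log
  have hgsum : Summable (fun y => q y * |‖M.s y M.xistar‖ + M.c y * ρ|) := by
    refine (summable_q_g M hq_pos hqsum ρ).congr fun y => ?_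
    rw [abs_of_nonneg (add_nonneg (norm_nonneg _) (mul_nonneg (M.c_nonneg y) hρ0.le))]
  have hE2 := my_slln hq_pos hiid hgsum
  have hE3 : ∀ᵐ ω ∂P, ∀ t ∈ (↑T : Set (EuclideanSpace ℝ (Fin d))),
      Tendsto (fun n : ℕ => (1/(n:ℝ)) * ∑ i : Fin n, Real.log (M.f (yseq i ω) t)) atTop
        (𝓝 (∑' y, q y * Real.log (M.f y t))) := by
    rw [ae_ball_iff T.countable_toSet]
    intro t ht
    have htc : t ∈ Metric.closedBall M.xistar ρ := hsphere_cb (hTsub t ht)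
    exact my_slln hq_pos hiid (summable_q_abslog M hq_pos hqsum hρ0.le hρr htc)
  filter_upwards [hest.2.2, hE1, hE2, hE3] with ω hω0 hω1 hω2 hω3
  obtain ⟨N0, hN0⟩ := hω0
  have h1 : ∀ᶠ n : ℕ in atTop,
      |(1/(n:ℝ)) * ∑ i : Fin n, Real.log (M.f (yseq i ω) M.xistar)
        - ∑' y, q y * Real.log (M.f y M.xistar)| < a/8 := by
    have := (Metric.tendsto_nhds.mp hω1) (a/8) (by linarith)
    simpa [Real.dist_eq] using this
  have h2 : ∀ᶠ n : ℕ in atTop,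
      (1/(n:ℝ)) * ∑ i : Fin n, (‖M.s (yseq i ω) M.xistar‖ + M.c (yseq i ω) * ρ) < G + 1 :=
    hω2.eventually_lt_const (by linarith)
  have h3 : ∀ᶠ n : ℕ in atTop, ∀ t ∈ T,
      |(1/(n:ℝ)) * ∑ i : Fin n, Real.log (M.f (yseq i ω) t)
        - ∑' y, q y * Real.log (M.f y t)| < a/8 := by
    rw [Filter.eventually_all_finset]
    intro t ht
    have := (Metric.tendsto_nhds.mp (hω3 t ht)) (a/8) (by linarith)
    simpa [Real.dist_eq] using this
  obtain ⟨N1, hN1⟩ := Filter.eventually_atTop.mp ((h1.and h2).and h3)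
  refine ⟨max N0 N1, ?_⟩
  intro n hn ξ hξXi hfar
  obtain ⟨⟨hb1, hb2⟩, hb3⟩ := hN1 n (le_trans (le_max_right _ _) hn)
  have hmle := hN0 n (le_trans (le_max_left _ _) hn)
  simp only [avgLogLik] at hmle ⊢
  set ys : Fin n → Y := fun i => yseq i ω with hysdef
  set xhat := est n ys with hxhat
  -- uniform bound on the sphere
  have hsphere : ∀ ζ ∈ Metric.sphere M.xistar ρ,
      (1/(n:ℝ)) * ∑ i, Real.log (M.f (ys i) ζ)
        < (∑' y, q y * Real.log (M.f y M.xistar)) - 3*a/4 := by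
    intro ζ hζ
    obtain ⟨t, htT, hζt⟩ : ∃ t ∈ T, ζ ∈ Metric.ball t ε := by
      have := hTcover hζ
      simpa using this
    have hζc : ζ ∈ Metric.closedBall M.xistar ρ := hsphere_cb hζ
    have htc : t ∈ Metric.closedBall M.xistar ρ := hsphere_cb (hTsub t htT)
    have hlipn := avg_lip M hρ0.le hρr n ys hζc htc
    have hgbar0 : 0 ≤ (1/(n:ℝ)) * ∑ i, (‖M.s (ys i) M.xistar‖ + M.c (ys i) * ρ) := by
      apply mul_nonneg (by positivity)
      exact Finset.sum_nonneg fun i _ =>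
        add_nonneg (norm_nonneg _) (mul_nonneg (M.c_nonneg _) hρ0.le)
    have hdist : ‖ζ - t‖ ≤ ε := by
      rw [← dist_eq_norm]; exact (Metric.mem_ball.mp hζt).le
    have hstep : |(1/(n:ℝ)) * ∑ i, Real.log (M.f (ys i) ζ)
        - (1/(n:ℝ)) * ∑ i, Real.log (M.f (ys i) t)| ≤
        ((1/(n:ℝ)) * ∑ i, (‖M.s (ys i) M.xistar‖ + M.c (ys i) * ρ)) * ε :=
      hlipn.trans (mul_le_mul_of_nonneg_left hdist hgbar0)
    have hεval : (G+1) * ε = a/8 := by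
      rw [hεdef]
      field_simp
    have hge : ((1/(n:ℝ)) * ∑ i, (‖M.s (ys i) M.xistar‖ + M.c (ys i) * ρ)) * ε
        ≤ (G+1) * ε := mul_le_mul_of_nonneg_right hb2.le hε.le
    have ht2 := hgap t (hTsub t htT)
    have e1 : (1/(n:ℝ)) * ∑ i, Real.log (M.f (ys i) ζ)
        - (1/(n:ℝ)) * ∑ i, Real.log (M.f (ys i) t) ≤
        ((1/(n:ℝ)) * ∑ i, (‖M.s (ys i) M.xistar‖ + M.c (ys i) * ρ)) * ε :=
      (le_abs_self _).trans hstep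
    have e2 : (1/(n:ℝ)) * ∑ i, Real.log (M.f (ys i) t)
        - ∑' y, q y * Real.log (M.f y t) < a/8 :=
      lt_of_le_of_lt (le_abs_self _) (hb3 t htT)
    linarith
  -- contradiction argument using connectedness
  by_contra hcon
  push_neg at hcon
  have hmle_star := hmle M.xistar M.xistar_mem
  have e3 : (∑' y, q y * Real.log (M.f y M.xistar)) - a/8
      < (1/(n:ℝ)) * ∑ i, Real.log (M.f (ys i) M.xistar) := by
    have := (abs_lt.mp hb1).1
    linarith
  set lam := (∑' y, q y * Real.log (M.f y M.xistar)) - a/2 with hlam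
  have hA := M.R8 n ys lam
  have hξA : ξ ∈ {ζ | ζ ∈ M.Xi ∧ lam < (1/(n:ℝ)) * ∑ i, Real.log (M.f (ys i) ζ)} := by
    refine ⟨hξXi, ?_⟩
    linarith
  have hstarA : M.xistar ∈
      {ζ | ζ ∈ M.Xi ∧ lam < (1/(n:ℝ)) * ∑ i, Real.log (M.f (ys i) ζ)} := by
    refine ⟨M.xistar_mem, ?_⟩
    linarith
  have himg := hA.image (fun ζ => ‖ζ - M.xistar‖)
    ((continuous_id.sub continuous_const).norm.continuousOn)
  have h0mem : (0:ℝ) ∈ (fun ζ => ‖ζ - M.xistar‖) ''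
      {ζ | ζ ∈ M.Xi ∧ lam < (1/(n:ℝ)) * ∑ i, Real.log (M.f (ys i) ζ)} :=
    ⟨M.xistar, hstarA, by simp⟩
  have hvmem : ‖ξ - M.xistar‖ ∈ (fun ζ => ‖ζ - M.xistar‖) ''
      {ζ | ζ ∈ M.Xi ∧ lam < (1/(n:ℝ)) * ∑ i, Real.log (M.f (ys i) ζ)} :=
    ⟨ξ, hξA, rfl⟩
  obtain ⟨ζ, hζA, hζn⟩ := (himg.ordConnected).out h0mem hvmem ⟨hρ0.le, hfar⟩
  have hζs : ζ ∈ Metric.sphere M.xistar ρ := by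
    rw [Metric.mem_sphere, dist_eq_norm]; exact hζn
  have hs1 := hsphere ζ hζs
  have hs2 : lam < (1/(n:ℝ)) * ∑ i, Real.log (M.f (ys i) ζ) := hζA.2
  linarith
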